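/- The function u1(h) = u0 - sqrt(g/2)(h - h0) sqrt(1/h + 1/h0) is strictly decreasing and strictly convex on (0, ∞). -/

import Mathlib

open Real

noncomputable def swQ (h0 x : ℝ) : ℝ := Real.sqrt (1 / x + 1 / h0)

noncomputable def swD1 (g h0 : ℝ) (x : ℝ) : ℝ :=
  -(Real.sqrt (g / 2) * swQ h0 x +
    Real.sqrt (g / 2) * (x - h0) * ((2 * swQ h0 x)⁻¹ * -((x ^ 2)⁻¹)))

section aux

variable {g h0 : ℝ}

lemma swS_pos {x : ℝ} (hx : 0 < x) (hh0 : 0 < h0) : 0 < 1 / x + 1 / h0 := by positivity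

lemma swQ_pos {x : ℝ} (hx : 0 < x) (hh0 : 0 < h0) : 0 < swQ h0 x :=
  Real.sqrt_pos.2 (swS_pos hx hh0)

lemma swQ_sq {x : ℝ} (hx : 0 < x) (hh0 : 0 < h0) : swQ h0 x ^ 2 = 1 / x + 1 / h0 :=
  Real.sq_sqrt (swS_pos hx hh0).le

lemma swQ_hasDeriv {x : ℝ} (hx : 0 < x) (hh0 : 0 < h0) :
    HasDerivAt (swQ h0) (1 / (2 * swQ h0 x) * -((x ^ 2)⁻¹)) x := by
  have hs : HasDerivAt (fun y : ℝ => 1 / y + 1 / h0) (-((x ^ 2)⁻¹)) x := by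
    simpa [one_div] using (hasDerivAt_inv hx.ne').add_const (h0⁻¹)
  exact (Real.hasDerivAt_sqrt (swS_pos hx hh0).ne').comp x hs

lemma swU_hasDeriv (u0 : ℝ) {x : ℝ} (hx : 0 < x) (hh0 : 0 < h0) :
    HasDerivAt (fun h : ℝ => u0 - Real.sqrt (g / 2) * (h - h0) * Real.sqrt (1 / h + 1 / h0))
      (swD1 g h0 x) x := by
  have h2 : HasDerivAt (fun y : ℝ => Real.sqrt (g / 2) * (y - h0)) (Real.sqrt (g / 2)) x := by
    simpa using ((hasDerivAt_id x).sub_const h0).const_mul (Real.sqrt (g / 2))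
  have h4 := (h2.mul (swQ_hasDeriv hx hh0)).const_sub u0
  exact h4.congr_deriv (by unfold swD1; beta_reduce; ring)

lemma swD1_neg (hg : 0 < g) {x : ℝ} (hx : 0 < x) (hh0 : 0 < h0) : swD1 g h0 x < 0 := by
  have hc : 0 < Real.sqrt (g / 2) := Real.sqrt_pos.2 (by linarith)
  have hQ := swQ_pos hx hh0
  have hq2 := swQ_sq hx hh0
  have hQ2 : swQ h0 x ^ 2 * x ^ 2 * h0 = x * h0 + x ^ 2 := by
    rw [hq2]; field_simp
  have hlt : (x - h0) * h0 < swQ h0 x * (2 * swQ h0 x * x ^ 2) * h0 := by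
    nlinarith [hQ2, mul_pos hx hh0, mul_pos hx hx, sq_nonneg h0]
  have hlt2 : x - h0 < swQ h0 x * (2 * swQ h0 x * x ^ 2) :=
    lt_of_mul_lt_mul_right hlt hh0.le
  have h1 : (x - h0) / (2 * swQ h0 x * x ^ 2) < swQ h0 x :=
    (div_lt_iff₀ (by positivity : (0:ℝ) < 2 * swQ h0 x * x ^ 2)).2 hlt2
  have hmain : 0 < swQ h0 x - (x - h0) / (2 * swQ h0 x * x ^ 2) := sub_pos.2 h1
  have e : swD1 g h0 x =
      -(Real.sqrt (g / 2) * (swQ h0 x - (x - h0) / (2 * swQ h0 x * x ^ 2))) := by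
    unfold swD1
    field_simp
    ring
  rw [e]
  exact neg_neg_of_pos (mul_pos hc hmain)

lemma swD1_hasDeriv (hg : 0 < g) {x : ℝ} (hx : 0 < x) (hh0 : 0 < h0) :
    ∃ V : ℝ, HasDerivAt (swD1 g h0) V x ∧ 0 < V := by
  have hQ := swQ_pos hx hh0
  have hq2 := swQ_sq hx hh0
  have hc : 0 < Real.sqrt (g / 2) := Real.sqrt_pos.2 (by linarith)
  have hq' := swQ_hasDeriv hx hh0
  set c := Real.sqrt (g / 2) with hcdef
  set qd := 1 / (2 * swQ h0 x) * -((x ^ 2)⁻¹) with hqd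
  have hA : HasDerivAt (fun y : ℝ => c * swQ h0 y) (c * qd) x := hq'.const_mul c
  have hB : HasDerivAt (fun y : ℝ => c * (y - h0)) c x := by
    simpa using ((hasDerivAt_id x).sub_const h0).const_mul c
  have h2Q : HasDerivAt (fun y : ℝ => 2 * swQ h0 y) (2 * qd) x := hq'.const_mul 2
  have hinv : HasDerivAt (fun y : ℝ => (2 * swQ h0 y)⁻¹)
      (-(2 * qd) / (2 * swQ h0 x) ^ 2) x := h2Q.inv (by positivity)
  have hC : HasDerivAt (fun y : ℝ => (y ^ 2)⁻¹)
      (-(↑2 * x ^ (2 - 1)) / (x ^ 2) ^ 2) x :=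
    (hasDerivAt_pow 2 x).inv (pow_ne_zero 2 hx.ne')
  have hD := hC.neg
  have hE := hinv.mul hD
  have hF := hB.mul hE
  have hG := (hA.add hF).neg
  refine ⟨_, hG, ?_⟩
  have hnum : 0 < 4 * h0 * swQ h0 x ^ 2 * x + x - h0 := by
    have e2 : 4 * h0 * swQ h0 x ^ 2 * x + x - h0 = 5 * x + 3 * h0 := by
      rw [hq2]; field_simp; ring
    rw [e2]; linarith
  have eV : -(c * qd + (c * ((2 * swQ h0 x)⁻¹ * -((x ^ 2)⁻¹)) +
        c * (x - h0) * (-(2 * qd) / (2 * swQ h0 x) ^ 2 * -((x ^ 2)⁻¹) +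
          (2 * swQ h0 x)⁻¹ * -(-(↑2 * x ^ (2 - 1)) / (x ^ 2) ^ 2)))) =
      c * (4 * h0 * swQ h0 x ^ 2 * x + x - h0) / (4 * swQ h0 x ^ 3 * x ^ 4) := by
    rw [hqd]
    norm_num
    field_simp
    ring
  simp only [Pi.mul_apply, Pi.neg_apply]
  rw [eV]
  exact div_pos (mul_pos hc hnum)
    (by positivity)

end aux

theorem shallow_water_shock_curve_monotone_convex (g h0 u0 : ℝ) (hg : 0 < g) (hh0 : 0 < h0) :
    StrictAntiOn
      (fun h : ℝ => u0 - Real.sqrt (g / 2) * (h - h0) * Real.sqrt (1 / h + 1 / h0))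
      (Set.Ioi 0) ∧
    StrictConvexOn ℝ (Set.Ioi 0)
      (fun h : ℝ => u0 - Real.sqrt (g / 2) * (h - h0) * Real.sqrt (1 / h + 1 / h0)) := by
  set f := fun h : ℝ => u0 - Real.sqrt (g / 2) * (h - h0) * Real.sqrt (1 / h + 1 / h0) with hf
  have hcont : ContinuousOn f (Set.Ioi 0) := fun x hx =>
    ((swU_hasDeriv (g := g) u0 hx hh0).differentiableAt).continuousAt.continuousWithinAt
  have hderiv : ∀ x ∈ Set.Ioi (0:ℝ), deriv f x = swD1 g h0 x := fun x hx =>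
    (swU_hasDeriv u0 hx hh0).deriv
  have hint : interior (Set.Ioi (0:ℝ)) = Set.Ioi 0 := isOpen_Ioi.interior_eq
  constructor
  · apply strictAntiOn_of_deriv_neg (convex_Ioi 0) hcont
    intro x hx
    rw [hint] at hx
    rw [hderiv x hx]
    exact swD1_neg hg hx hh0
  · apply strictConvexOn_of_deriv2_pos (convex_Ioi 0) hcont
    intro x hx
    rw [hint] at hx
    have hev : deriv f =ᶠ[nhds x] swD1 g h0 :=
      Filter.eventually_of_mem (isOpen_Ioi.mem_nhds hx) (fun y hy => hderiv y hy)
    have h2 : deriv^[2] f x = deriv (swD1 g h0) x := by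
      simp only [Function.iterate_succ, Function.iterate_zero, Function.comp_apply, id_eq]
      exact hev.deriv_eq
    rw [h2]
    obtain ⟨V, hV, hVpos⟩ := swD1_hasDeriv hg hx hh0
    rw [hV.deriv]
    exact hVpos
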